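/- Two directed paths a and a′ in the square annulus X are joined by a directed homotopy in X if and only if they pass on the same side of the obstruction (both below, or both above). Consequently there are exactly two classes of directed paths in X up to directed homotopy. (The computation in 2.1 that the fundamental category of the square annulus has exactly two arrows 0 → 1.) -/

import Mathlib

open Set

/-- The obstruction: the open square `(1/3, 2/3) × (1/3, 2/3)`. -/
def Qobs : Set (ℝ × ℝ) := Ioo (1/3 : ℝ) (2/3) ×ˢ Ioo (1/3 : ℝ) (2/3)

/-- A directed path in `[0,1]²` avoiding `Q`, with nondecreasing coordinates,
from `(0,0)` to `(1,1)`. -/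
def DiPath (Q : Set (ℝ × ℝ)) (a : ℝ → ℝ × ℝ) : Prop :=
  ContinuousOn a (Icc 0 1) ∧
  (∀ t ∈ Icc (0:ℝ) 1, a t ∈ Icc (0:ℝ) 1 ×ˢ Icc (0:ℝ) 1) ∧
  (∀ t ∈ Icc (0:ℝ) 1, a t ∉ Q) ∧
  MonotoneOn (fun t => (a t).1) (Icc 0 1) ∧
  MonotoneOn (fun t => (a t).2) (Icc 0 1) ∧
  a 0 = (0, 0) ∧ a 1 = (1, 1)

/-- `a` passes below the obstruction. -/
def Below (a : ℝ → ℝ × ℝ) : Prop :=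
  ∀ t ∈ Icc (0:ℝ) 1, (a t).1 ∈ Ioo (1/3 : ℝ) (2/3) → (a t).2 ≤ 1/3

/-- `a` passes above the obstruction. -/
def Above (a : ℝ → ℝ × ℝ) : Prop :=
  ∀ t ∈ Icc (0:ℝ) 1, (a t).1 ∈ Ioo (1/3 : ℝ) (2/3) → (a t).2 ≥ 2/3

/-- A directed homotopy from `a` to `a'` avoiding `Q`: a continuous map
`H : [0,1] × [0,1] → [0,1]²` with `H (-,0) = a`, `H (-,1) = a'`, fixed endpoints
`(0,0)` and `(1,1)`, avoiding `Q`, all of whose intermediate paths have nondecreasing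
coordinates. -/
def DiHomotopy (Q : Set (ℝ × ℝ)) (a a' : ℝ → ℝ × ℝ) (H : ℝ → ℝ → ℝ × ℝ) : Prop :=
  ContinuousOn (fun p : ℝ × ℝ => H p.1 p.2) (Icc 0 1 ×ˢ Icc 0 1) ∧
  (∀ t ∈ Icc (0:ℝ) 1, ∀ s ∈ Icc (0:ℝ) 1, H t s ∈ Icc (0:ℝ) 1 ×ˢ Icc (0:ℝ) 1) ∧
  (∀ t ∈ Icc (0:ℝ) 1, H t 0 = a t) ∧
  (∀ t ∈ Icc (0:ℝ) 1, H t 1 = a' t) ∧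
  (∀ s ∈ Icc (0:ℝ) 1, H 0 s = (0, 0)) ∧
  (∀ s ∈ Icc (0:ℝ) 1, H 1 s = (1, 1)) ∧
  (∀ t ∈ Icc (0:ℝ) 1, ∀ s ∈ Icc (0:ℝ) 1, H t s ∉ Q) ∧
  (∀ s ∈ Icc (0:ℝ) 1, MonotoneOn (fun t => (H t s).1) (Icc 0 1) ∧
    MonotoneOn (fun t => (H t s).2) (Icc 0 1))


lemma mem_Qobs {p : ℝ × ℝ} :
    p ∈ Qobs ↔ (1/3 < p.1 ∧ p.1 < 2/3) ∧ (1/3 < p.2 ∧ p.2 < 2/3) := by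
  simp [Qobs, Set.mem_prod, Set.mem_Ioo]

/-- The first coordinate hits `1/2` somewhere. -/
lemma DiPath.exists_half {a : ℝ → ℝ × ℝ} (ha : DiPath Qobs a) :
    ∃ t ∈ Icc (0:ℝ) 1, (a t).1 = 1/2 := by
  obtain ⟨hc, -, -, -, -, h0, h1⟩ := ha
  have hsub := intermediate_value_Icc (by norm_num : (0:ℝ) ≤ 1) hc.fst
  have : (1/2 : ℝ) ∈ (fun t => (a t).1) '' Icc 0 1 := by
    apply hsub
    rw [h0, h1]
    constructor <;> norm_num
  obtain ⟨t, ht, hx⟩ := this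
  exact ⟨t, ht, hx⟩

lemma DiPath.not_below_above {a : ℝ → ℝ × ℝ} (ha : DiPath Qobs a)
    (hb : Below a) (hab : Above a) : False := by
  obtain ⟨t, ht, hx⟩ := ha.exists_half
  have hxm : (a t).1 ∈ Ioo (1/3 : ℝ) (2/3) := by rw [hx]; constructor <;> norm_num
  have h1 := hb t ht hxm
  have h2 := hab t ht hxm
  linarith

lemma DiPath.below_or_above {a : ℝ → ℝ × ℝ} (ha : DiPath Qobs a) :
    Below a ∨ Above a := by
  by_contra h
  push_neg at h
  obtain ⟨hnb, hna⟩ := h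
  unfold Below at hnb; unfold Above at hna
  push_neg at hnb hna
  obtain ⟨t, ht, hxt, hyt⟩ := hnb
  obtain ⟨t', ht', hxt', hyt'⟩ := hna
  obtain ⟨hc, hsq, hQ, hm1, hm2, h0, h1⟩ := ha
  have hyt2 : 2/3 ≤ (a t).2 := by
    by_contra hlt
    push_neg at hlt
    exact hQ t ht (mem_Qobs.2 ⟨⟨hxt.1, hxt.2⟩, hyt, hlt⟩)
  have hyt'2 : (a t').2 ≤ 1/3 := by
    by_contra hlt
    push_neg at hlt
    exact hQ t' ht' (mem_Qobs.2 ⟨⟨hxt'.1, hxt'.2⟩, hlt, hyt'⟩)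
  have htt : t' < t := by
    by_contra hle
    push_neg at hle
    have := hm2 ht ht' hle
    simp only at this
    linarith
  have hsub : Icc t' t ⊆ Icc (0:ℝ) 1 := Icc_subset_Icc ht'.1 ht.2
  have hivt := intermediate_value_Icc htt.le ((hc.mono hsub).snd)
  have : (1/2 : ℝ) ∈ (fun u => (a u).2) '' Icc t' t := by
    apply hivt
    constructor <;> linarith
  obtain ⟨u, hu, hyu⟩ := this
  have hu01 : u ∈ Icc (0:ℝ) 1 := hsub hu
  have hx1 : 1/3 < (a u).1 := lt_of_lt_of_le hxt'.1 (hm1 ht' hu01 hu.1)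
  have hx2 : (a u).1 < 2/3 := lt_of_le_of_lt (hm1 hu01 ht hu.2) hxt.2
  exact hQ u hu01 (mem_Qobs.2 ⟨⟨hx1, hx2⟩, by rw [show (a u).2 = 1/2 from hyu]; norm_num⟩)

/-- A Below path stays in the L-shaped region `{y ≤ 1/3} ∪ {x ≥ 2/3}`. -/
lemma DiPath.below_ge {a : ℝ → ℝ × ℝ} (ha : DiPath Qobs a) (hb : Below a)
    {t : ℝ} (ht : t ∈ Icc (0:ℝ) 1) (hy : 1/3 < (a t).2) : 2/3 ≤ (a t).1 := by
  by_contra h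
  push_neg at h
  rcases lt_or_ge (1/3 : ℝ) ((a t).1) with h1 | h1
  · have := hb t ht ⟨h1, h⟩
    linarith
  · obtain ⟨hc, hsq, hQ, hm1, hm2, h0, h1e⟩ := ha
    have hsub : Icc t 1 ⊆ Icc (0:ℝ) 1 := Icc_subset_Icc ht.1 le_rfl
    have hivt := intermediate_value_Icc ht.2 ((hc.mono hsub).fst)
    have : (1/2 : ℝ) ∈ (fun u => (a u).1) '' Icc t 1 := by
      apply hivt
      rw [h1e]
      exact ⟨by norm_num; linarith, by norm_num⟩
    obtain ⟨u, hu, hxu⟩ := this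
    have hu01 : u ∈ Icc (0:ℝ) 1 := hsub hu
    have h2 := hb u hu01 (by rw [show (a u).1 = 1/2 from hxu]; constructor <;> norm_num)
    have h3 : (a t).2 ≤ (a u).2 := hm2 ht hu01 hu.1
    linarith

/-- An Above path stays in the region `{y ≥ 2/3} ∪ {x ≤ 1/3}`. -/
lemma DiPath.above_le {a : ℝ → ℝ × ℝ} (ha : DiPath Qobs a) (hab : Above a)
    {t : ℝ} (ht : t ∈ Icc (0:ℝ) 1) (hy : (a t).2 < 2/3) : (a t).1 ≤ 1/3 := by
  by_contra h
  push_neg at h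
  rcases lt_or_ge ((a t).1) (2/3 : ℝ) with h1 | h1
  · have := hab t ht ⟨h, h1⟩
    linarith
  · obtain ⟨hc, hsq, hQ, hm1, hm2, h0, h1e⟩ := ha
    have hsub : Icc 0 t ⊆ Icc (0:ℝ) 1 := Icc_subset_Icc le_rfl ht.2
    have hivt := intermediate_value_Icc ht.1 ((hc.mono hsub).fst)
    have : (1/2 : ℝ) ∈ (fun u => (a u).1) '' Icc 0 t := by
      apply hivt
      rw [h0]
      exact ⟨by norm_num, by linarith⟩
    obtain ⟨u, hu, hxu⟩ := this
    have hu01 : u ∈ Icc (0:ℝ) 1 := hsub hu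
    have h2 := hab u hu01 (by rw [show (a u).1 = 1/2 from hxu]; constructor <;> norm_num)
    have h3 : (a u).2 ≤ (a t).2 := hm2 hu01 ht hu.2
    linarith

lemma ContinuousOn.max'' {f g : ℝ × ℝ → ℝ} {s : Set (ℝ × ℝ)} (hf : ContinuousOn f s)
    (hg : ContinuousOn g s) : ContinuousOn (fun x => max (f x) (g x)) s :=
  continuous_max.comp_continuousOn (hf.prodMk hg)

lemma ContinuousOn.min'' {f g : ℝ × ℝ → ℝ} {s : Set (ℝ × ℝ)} (hf : ContinuousOn f s)
    (hg : ContinuousOn g s) : ContinuousOn (fun x => min (f x) (g x)) s :=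
  continuous_min.comp_continuousOn (hf.prodMk hg)

lemma comb_bounds {c x y : ℝ} (hc0 : 0 ≤ c) (hc1 : c ≤ 1) (hx0 : 0 ≤ x) (hx1 : x ≤ 1)
    (hy0 : 0 ≤ y) (hy1 : y ≤ 1) : 0 ≤ (1-c)*x + c*y ∧ (1-c)*x + c*y ≤ 1 :=
  ⟨by nlinarith, by nlinarith⟩

lemma uv_mem {s : ℝ} (hs : s ∈ Icc (0:ℝ) 1) :
    (0 ≤ min (2*s) 1 ∧ min (2*s) 1 ≤ 1) ∧ (0 ≤ max (2*s-1) 0 ∧ max (2*s-1) 0 ≤ 1) := by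
  obtain ⟨h0, h1⟩ := hs
  exact ⟨⟨le_min (by linarith) (by norm_num), min_le_right _ _⟩,
    ⟨le_max_right _ _, max_le (by linarith) (by norm_num)⟩⟩

lemma lerp_le {u v p p' q q' r r' : ℝ} (hu0 : 0 ≤ u) (hu1 : u ≤ 1) (hv0 : 0 ≤ v)
    (hv1 : v ≤ 1) (hp : p ≤ p') (hq : q ≤ q') (hr : r ≤ r') :
    (1-v)*((1-u)*p + u*q) + v*r ≤ (1-v)*((1-u)*p' + u*q') + v*r' := by
  nlinarith [mul_nonneg (mul_nonneg (sub_nonneg.2 hv1) (sub_nonneg.2 hu1)) (sub_nonneg.2 hp),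
    mul_nonneg (mul_nonneg (sub_nonneg.2 hv1) hu0) (sub_nonneg.2 hq),
    mul_nonneg hv0 (sub_nonneg.2 hr)]

lemma homotopy_of_below {a a' : ℝ → ℝ × ℝ} (ha : DiPath Qobs a) (ha' : DiPath Qobs a')
    (hb : Below a) (hb' : Below a') : ∃ H, DiHomotopy Qobs a a' H := by
  obtain ⟨hc, hsq, hQ, hm1, hm2, h0, h1⟩ := ha
  obtain ⟨hc', hsq', hQ', hm1', hm2', h0', h1'⟩ := ha'
  refine ⟨fun t s =>
    ((1 - max (2*s-1) 0) * ((1 - min (2*s) 1) * (a t).1 + min (2*s) 1 * max (a t).1 ((a' t).1))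
        + max (2*s-1) 0 * (a' t).1,
     (1 - max (2*s-1) 0) * ((1 - min (2*s) 1) * (a t).2 + min (2*s) 1 * min (a t).2 ((a' t).2))
        + max (2*s-1) 0 * (a' t).2),
    ?_, ?_, ?_, ?_, ?_, ?_, ?_, ?_⟩
  · -- continuity
    have hA : ContinuousOn (fun p : ℝ × ℝ => a p.1) (Icc (0:ℝ) 1 ×ˢ Icc (0:ℝ) 1) :=
      hc.comp continuous_fst.continuousOn (fun p hp => hp.1)
    have hB : ContinuousOn (fun p : ℝ × ℝ => a' p.1) (Icc (0:ℝ) 1 ×ˢ Icc (0:ℝ) 1) :=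
      hc'.comp continuous_fst.continuousOn (fun p hp => hp.1)
    have hu : Continuous fun p : ℝ × ℝ => min (2*p.2) 1 :=
      ((continuous_const.mul continuous_snd).min continuous_const)
    have hv : Continuous fun p : ℝ × ℝ => max (2*p.2-1) 0 :=
      (((continuous_const.mul continuous_snd).sub continuous_const).max continuous_const)
    apply ContinuousOn.prodMk
    · exact ((continuous_const.sub hv).continuousOn.mul
        (((continuous_const.sub hu).continuousOn.mul hA.fst).add
          (hu.continuousOn.mul (ContinuousOn.max'' hA.fst hB.fst)))).add (hv.continuousOn.mul hB.fst)
    · exact ((continuous_const.sub hv).continuousOn.mul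
        (((continuous_const.sub hu).continuousOn.mul hA.snd).add
          (hu.continuousOn.mul (ContinuousOn.min'' hA.snd hB.snd)))).add (hv.continuousOn.mul hB.snd)
  · -- stays in the unit square
    intro t ht s hs
    obtain ⟨⟨hu0, hu1⟩, hv0, hv1⟩ := uv_mem hs
    obtain ⟨⟨hx0, hx1⟩, hy0, hy1⟩ := hsq t ht
    obtain ⟨⟨hx0', hx1'⟩, hy0', hy1'⟩ := hsq' t ht
    constructor
    · have hmax0 : 0 ≤ max (a t).1 ((a' t).1) := le_trans hx0 (le_max_left _ _)
      have hmax1 : max (a t).1 ((a' t).1) ≤ 1 := max_le hx1 hx1'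
      obtain ⟨hA0, hA1⟩ := comb_bounds hu0 hu1 hx0 hx1 hmax0 hmax1
      exact mem_Icc.2 (comb_bounds hv0 hv1 hA0 hA1 hx0' hx1')
    · have hmin0 : 0 ≤ min (a t).2 ((a' t).2) := le_min hy0 hy0'
      have hmin1 : min (a t).2 ((a' t).2) ≤ 1 := le_trans (min_le_left _ _) hy1
      obtain ⟨hA0, hA1⟩ := comb_bounds hu0 hu1 hy0 hy1 hmin0 hmin1
      exact mem_Icc.2 (comb_bounds hv0 hv1 hA0 hA1 hy0' hy1')
  · -- H t 0 = a t
    intro t ht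
    norm_num
  · -- H t 1 = a' t
    intro t ht
    norm_num
  · -- H 0 s = (0,0)
    intro s hs
    simp [h0, h0']
  · -- H 1 s = (1,1)
    intro s hs
    obtain ⟨⟨hu0, hu1⟩, hv0, hv1⟩ := uv_mem hs
    have : a 1 = ((1:ℝ), (1:ℝ)) := h1
    rw [Prod.ext_iff]
    constructor <;> (simp [h1, h1']; try ring)
  · -- avoids Qobs
    intro t ht s hs hmem
    rw [mem_Qobs] at hmem
    obtain ⟨⟨hx1, hx2⟩, hy1, hy2⟩ := hmem
    simp only at hx1 hx2 hy1 hy2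
    obtain ⟨⟨hu0, hu1⟩, hv0, hv1⟩ := uv_mem hs
    rcases le_or_gt s (1/2) with hhalf | hhalf
    · have hveq : max (2*s-1) 0 = 0 := max_eq_right (by linarith)
      rw [hveq] at hx1 hx2 hy1 hy2
      simp only [sub_zero, one_mul, zero_mul, add_zero] at hx1 hx2 hy1 hy2
      -- y ≤ (a t).2
      have hyle : (1 - min (2*s) 1) * (a t).2 + min (2*s) 1 * min (a t).2 ((a' t).2)
          ≤ (a t).2 := by
        nlinarith [min_le_left (a t).2 ((a' t).2)]
      have hat2 : 1/3 < (a t).2 := lt_of_lt_of_le hy1 hyle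
      have hat1 : 2/3 ≤ (a t).1 :=
        DiPath.below_ge ⟨hc, hsq, hQ, hm1, hm2, h0, h1⟩ hb ht hat2
      have hxge : (a t).1 ≤ (1 - min (2*s) 1) * (a t).1
          + min (2*s) 1 * max (a t).1 ((a' t).1) := by
        nlinarith [le_max_left (a t).1 ((a' t).1)]
      linarith
    · have hueq : min (2*s) 1 = 1 := min_eq_right (by linarith)
      rw [hueq] at hx1 hx2 hy1 hy2
      simp only [sub_self, zero_mul, one_mul, zero_add] at hx1 hx2 hy1 hy2
      have hyle : (1 - max (2*s-1) 0) * min (a t).2 ((a' t).2) + max (2*s-1) 0 * (a' t).2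
          ≤ (a' t).2 := by
        nlinarith [min_le_right (a t).2 ((a' t).2)]
      have hat2 : 1/3 < (a' t).2 := lt_of_lt_of_le hy1 hyle
      have hat1 : 2/3 ≤ (a' t).1 :=
        DiPath.below_ge ⟨hc', hsq', hQ', hm1', hm2', h0', h1'⟩ hb' ht hat2
      have hxge : (a' t).1 ≤ (1 - max (2*s-1) 0) * max (a t).1 ((a' t).1)
          + max (2*s-1) 0 * (a' t).1 := by
        nlinarith [le_max_right (a t).1 ((a' t).1)]
      linarith
  · -- monotone intermediate paths
    intro s hs
    obtain ⟨⟨hu0, hu1⟩, hv0, hv1⟩ := uv_mem hs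
    constructor
    · intro t1 ht1 t2 ht2 h12
      exact lerp_le hu0 hu1 hv0 hv1 (hm1 ht1 ht2 h12)
        (max_le_max (hm1 ht1 ht2 h12) (hm1' ht1 ht2 h12)) (hm1' ht1 ht2 h12)
    · intro t1 ht1 t2 ht2 h12
      exact lerp_le hu0 hu1 hv0 hv1 (hm2 ht1 ht2 h12)
        (min_le_min (hm2 ht1 ht2 h12) (hm2' ht1 ht2 h12)) (hm2' ht1 ht2 h12)

lemma homotopy_of_above {a a' : ℝ → ℝ × ℝ} (ha : DiPath Qobs a) (ha' : DiPath Qobs a')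
    (hb : Above a) (hb' : Above a') : ∃ H, DiHomotopy Qobs a a' H := by
  obtain ⟨hc, hsq, hQ, hm1, hm2, h0, h1⟩ := ha
  obtain ⟨hc', hsq', hQ', hm1', hm2', h0', h1'⟩ := ha'
  refine ⟨fun t s =>
    ((1 - max (2*s-1) 0) * ((1 - min (2*s) 1) * (a t).1 + min (2*s) 1 * min (a t).1 ((a' t).1))
        + max (2*s-1) 0 * (a' t).1,
     (1 - max (2*s-1) 0) * ((1 - min (2*s) 1) * (a t).2 + min (2*s) 1 * max (a t).2 ((a' t).2))
        + max (2*s-1) 0 * (a' t).2),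
    ?_, ?_, ?_, ?_, ?_, ?_, ?_, ?_⟩
  · have hA : ContinuousOn (fun p : ℝ × ℝ => a p.1) (Icc (0:ℝ) 1 ×ˢ Icc (0:ℝ) 1) :=
      hc.comp continuous_fst.continuousOn (fun p hp => hp.1)
    have hB : ContinuousOn (fun p : ℝ × ℝ => a' p.1) (Icc (0:ℝ) 1 ×ˢ Icc (0:ℝ) 1) :=
      hc'.comp continuous_fst.continuousOn (fun p hp => hp.1)
    have hu : Continuous fun p : ℝ × ℝ => min (2*p.2) 1 :=
      ((continuous_const.mul continuous_snd).min continuous_const)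
    have hv : Continuous fun p : ℝ × ℝ => max (2*p.2-1) 0 :=
      (((continuous_const.mul continuous_snd).sub continuous_const).max continuous_const)
    apply ContinuousOn.prodMk
    · exact ((continuous_const.sub hv).continuousOn.mul
        (((continuous_const.sub hu).continuousOn.mul hA.fst).add
          (hu.continuousOn.mul (ContinuousOn.min'' hA.fst hB.fst)))).add
            (hv.continuousOn.mul hB.fst)
    · exact ((continuous_const.sub hv).continuousOn.mul
        (((continuous_const.sub hu).continuousOn.mul hA.snd).add
          (hu.continuousOn.mul (ContinuousOn.max'' hA.snd hB.snd)))).add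
            (hv.continuousOn.mul hB.snd)
  · intro t ht s hs
    obtain ⟨⟨hu0, hu1⟩, hv0, hv1⟩ := uv_mem hs
    obtain ⟨⟨hx0, hx1⟩, hy0, hy1⟩ := hsq t ht
    obtain ⟨⟨hx0', hx1'⟩, hy0', hy1'⟩ := hsq' t ht
    constructor
    · have hmin0 : 0 ≤ min (a t).1 ((a' t).1) := le_min hx0 hx0'
      have hmin1 : min (a t).1 ((a' t).1) ≤ 1 := le_trans (min_le_left _ _) hx1
      obtain ⟨hA0, hA1⟩ := comb_bounds hu0 hu1 hx0 hx1 hmin0 hmin1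
      exact mem_Icc.2 (comb_bounds hv0 hv1 hA0 hA1 hx0' hx1')
    · have hmax0 : 0 ≤ max (a t).2 ((a' t).2) := le_trans hy0 (le_max_left _ _)
      have hmax1 : max (a t).2 ((a' t).2) ≤ 1 := max_le hy1 hy1'
      obtain ⟨hA0, hA1⟩ := comb_bounds hu0 hu1 hy0 hy1 hmax0 hmax1
      exact mem_Icc.2 (comb_bounds hv0 hv1 hA0 hA1 hy0' hy1')
  · intro t ht
    norm_num
  · intro t ht
    norm_num
  · intro s hs
    simp [h0, h0']
  · intro s hs
    rw [Prod.ext_iff]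
    constructor <;> (simp [h1, h1']; try ring)
  · intro t ht s hs hmem
    rw [mem_Qobs] at hmem
    obtain ⟨⟨hx1, hx2⟩, hy1, hy2⟩ := hmem
    simp only at hx1 hx2 hy1 hy2
    obtain ⟨⟨hu0, hu1⟩, hv0, hv1⟩ := uv_mem hs
    rcases le_or_gt s (1/2) with hhalf | hhalf
    · have hveq : max (2*s-1) 0 = 0 := max_eq_right (by linarith)
      rw [hveq] at hx1 hx2 hy1 hy2
      simp only [sub_zero, one_mul, zero_mul, add_zero] at hx1 hx2 hy1 hy2
      have hyge : (a t).2 ≤ (1 - min (2*s) 1) * (a t).2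
          + min (2*s) 1 * max (a t).2 ((a' t).2) := by
        nlinarith [le_max_left (a t).2 ((a' t).2)]
      have hat2 : (a t).2 < 2/3 := lt_of_le_of_lt hyge hy2
      have hat1 : (a t).1 ≤ 1/3 :=
        DiPath.above_le ⟨hc, hsq, hQ, hm1, hm2, h0, h1⟩ hb ht hat2
      have hxle : (1 - min (2*s) 1) * (a t).1
          + min (2*s) 1 * min (a t).1 ((a' t).1) ≤ (a t).1 := by
        nlinarith [min_le_left (a t).1 ((a' t).1)]
      linarith
    · have hueq : min (2*s) 1 = 1 := min_eq_right (by linarith)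
      rw [hueq] at hx1 hx2 hy1 hy2
      simp only [sub_self, zero_mul, one_mul, zero_add] at hx1 hx2 hy1 hy2
      have hyge : (a' t).2 ≤ (1 - max (2*s-1) 0) * max (a t).2 ((a' t).2)
          + max (2*s-1) 0 * (a' t).2 := by
        nlinarith [le_max_right (a t).2 ((a' t).2)]
      have hat2 : (a' t).2 < 2/3 := lt_of_le_of_lt hyge hy2
      have hat1 : (a' t).1 ≤ 1/3 :=
        DiPath.above_le ⟨hc', hsq', hQ', hm1', hm2', h0', h1'⟩ hb' ht hat2
      have hxle : (1 - max (2*s-1) 0) * min (a t).1 ((a' t).1)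
          + max (2*s-1) 0 * (a' t).1 ≤ (a' t).1 := by
        nlinarith [min_le_right (a t).1 ((a' t).1)]
      linarith
  · intro s hs
    obtain ⟨⟨hu0, hu1⟩, hv0, hv1⟩ := uv_mem hs
    constructor
    · intro t1 ht1 t2 ht2 h12
      exact lerp_le hu0 hu1 hv0 hv1 (hm1 ht1 ht2 h12)
        (min_le_min (hm1 ht1 ht2 h12) (hm1' ht1 ht2 h12)) (hm1' ht1 ht2 h12)
    · intro t1 ht1 t2 ht2 h12
      exact lerp_le hu0 hu1 hv0 hv1 (hm2 ht1 ht2 h12)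
        (max_le_max (hm2 ht1 ht2 h12) (hm2' ht1 ht2 h12)) (hm2' ht1 ht2 h12)

lemma same_side {a a' : ℝ → ℝ × ℝ} {H : ℝ → ℝ → ℝ × ℝ} (hH : DiHomotopy Qobs a a' H) :
    (Below a ∧ Below a') ∨ (Above a ∧ Above a') := by
  obtain ⟨hc, hsq, hs0, hs1, he0, he1, hQ, hmono⟩ := hH
  have hpath : ∀ s ∈ Icc (0:ℝ) 1, DiPath Qobs (fun t => H t s) := by
    intro s hs
    refine ⟨?_, fun t ht => hsq t ht s hs, fun t ht => hQ t ht s hs,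
      (hmono s hs).1, (hmono s hs).2, he0 s hs, he1 s hs⟩
    exact hc.comp (Continuous.continuousOn (continuous_id.prodMk continuous_const))
      (fun t ht => ⟨ht, hs⟩)
  -- neighborhoods on which the side is constant
  have nbhdB : ∀ s₀, s₀ ∈ Icc (0:ℝ) 1 → Below (fun t => H t s₀) →
      ∃ W, IsOpen W ∧ s₀ ∈ W ∧ ∀ s ∈ W ∩ Icc (0:ℝ) 1, Below (fun t => H t s) := by
    intro s₀ hs₀ hbel
    obtain ⟨t₀, ht₀, hx₀⟩ := (hpath s₀ hs₀).exists_half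

    have hy₀ : (H t₀ s₀).2 ≤ 1/3 := hbel t₀ ht₀ (by rw [hx₀]; constructor <;> norm_num)
    have hO : IsOpen (Ioo (1/3 : ℝ) (2/3) ×ˢ Iio (2/3 : ℝ)) := isOpen_Ioo.prod isOpen_Iio
    have hmemO : H t₀ s₀ ∈ Ioo (1/3 : ℝ) (2/3) ×ˢ Iio (2/3 : ℝ) := by
      refine ⟨by rw [hx₀]; constructor <;> norm_num, ?_⟩
      simp only [mem_Iio]; linarith
    have hcwa : ContinuousWithinAt (fun p : ℝ × ℝ => H p.1 p.2)
        (Icc (0:ℝ) 1 ×ˢ Icc (0:ℝ) 1) (t₀, s₀) := hc (t₀, s₀) ⟨ht₀, hs₀⟩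
    have hpre : (fun p : ℝ × ℝ => H p.1 p.2) ⁻¹' (Ioo (1/3 : ℝ) (2/3) ×ˢ Iio (2/3 : ℝ))
        ∈ nhdsWithin (t₀, s₀) (Icc (0:ℝ) 1 ×ˢ Icc (0:ℝ) 1) :=
      hcwa (hO.mem_nhds hmemO)
    obtain ⟨U, hUo, hUm, hUsub⟩ := mem_nhdsWithin.mp hpre
    refine ⟨{s | (t₀, s) ∈ U}, hUo.preimage (Continuous.prodMk_right t₀), hUm, ?_⟩
    rintro s ⟨hsW, hsI⟩
    have hval : H t₀ s ∈ Ioo (1/3 : ℝ) (2/3) ×ˢ Iio (2/3 : ℝ) :=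
      hUsub ⟨hsW, ht₀, hsI⟩
    have hnotab : ¬ Above (fun t => H t s) := by
      intro hab
      have h3 : ((fun t => H t s) t₀).2 ≥ 2/3 := hab t₀ ht₀ hval.1
      have h2 : (H t₀ s).2 < 2/3 := hval.2
      simp only at h3
      linarith
    rcases (hpath s hsI).below_or_above with h | h
    · exact h
    · exact absurd h hnotab
  have nbhdA : ∀ s₀, s₀ ∈ Icc (0:ℝ) 1 → Above (fun t => H t s₀) →
      ∃ W, IsOpen W ∧ s₀ ∈ W ∧ ∀ s ∈ W ∩ Icc (0:ℝ) 1, Above (fun t => H t s) := by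
    intro s₀ hs₀ habo
    obtain ⟨t₀, ht₀, hx₀⟩ := (hpath s₀ hs₀).exists_half

    have hy₀ : 2/3 ≤ (H t₀ s₀).2 := habo t₀ ht₀ (by rw [hx₀]; constructor <;> norm_num)
    have hO : IsOpen (Ioo (1/3 : ℝ) (2/3) ×ˢ Ioi (1/3 : ℝ)) := isOpen_Ioo.prod isOpen_Ioi
    have hmemO : H t₀ s₀ ∈ Ioo (1/3 : ℝ) (2/3) ×ˢ Ioi (1/3 : ℝ) := by
      refine ⟨by rw [hx₀]; constructor <;> norm_num, ?_⟩
      simp only [mem_Ioi]; linarith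
    have hcwa : ContinuousWithinAt (fun p : ℝ × ℝ => H p.1 p.2)
        (Icc (0:ℝ) 1 ×ˢ Icc (0:ℝ) 1) (t₀, s₀) := hc (t₀, s₀) ⟨ht₀, hs₀⟩
    have hpre : (fun p : ℝ × ℝ => H p.1 p.2) ⁻¹' (Ioo (1/3 : ℝ) (2/3) ×ˢ Ioi (1/3 : ℝ))
        ∈ nhdsWithin (t₀, s₀) (Icc (0:ℝ) 1 ×ˢ Icc (0:ℝ) 1) :=
      hcwa (hO.mem_nhds hmemO)
    obtain ⟨U, hUo, hUm, hUsub⟩ := mem_nhdsWithin.mp hpre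
    refine ⟨{s | (t₀, s) ∈ U}, hUo.preimage (Continuous.prodMk_right t₀), hUm, ?_⟩
    rintro s ⟨hsW, hsI⟩
    have hval : H t₀ s ∈ Ioo (1/3 : ℝ) (2/3) ×ˢ Ioi (1/3 : ℝ) :=
      hUsub ⟨hsW, ht₀, hsI⟩
    have hnotb : ¬ Below (fun t => H t s) := by
      intro hbe
      have h3 : ((fun t => H t s) t₀).2 ≤ 1/3 := hbe t₀ ht₀ hval.1
      have h2 : 1/3 < (H t₀ s).2 := hval.2
      simp only at h3
      linarith
    rcases (hpath s hsI).below_or_above with h | h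
    · exact absurd h hnotb
    · exact h
  -- build open sets
  have choiceB : ∀ s : ℝ, ∃ W, IsOpen W ∧
      (s ∈ Icc (0:ℝ) 1 ∧ Below (fun t => H t s) →
        s ∈ W ∧ ∀ s' ∈ W ∩ Icc (0:ℝ) 1, Below (fun t => H t s')) := by
    intro s
    by_cases h : s ∈ Icc (0:ℝ) 1 ∧ Below (fun t => H t s)
    · obtain ⟨W, h1, h2, h3⟩ := nbhdB s h.1 h.2
      exact ⟨W, h1, fun _ => ⟨h2, h3⟩⟩
    · exact ⟨∅, isOpen_empty, fun hh => absurd hh h⟩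
  have choiceA : ∀ s : ℝ, ∃ W, IsOpen W ∧
      (s ∈ Icc (0:ℝ) 1 ∧ Above (fun t => H t s) →
        s ∈ W ∧ ∀ s' ∈ W ∩ Icc (0:ℝ) 1, Above (fun t => H t s')) := by
    intro s
    by_cases h : s ∈ Icc (0:ℝ) 1 ∧ Above (fun t => H t s)
    · obtain ⟨W, h1, h2, h3⟩ := nbhdA s h.1 h.2
      exact ⟨W, h1, fun _ => ⟨h2, h3⟩⟩
    · exact ⟨∅, isOpen_empty, fun hh => absurd hh h⟩
  choose WB hWBo hWB using choiceB
  choose WA hWAo hWA using choiceA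
  set U : Set ℝ := ⋃ s : {s : ℝ // s ∈ Icc (0:ℝ) 1 ∧ Below (fun t => H t s)}, WB s with hU
  set V : Set ℝ := ⋃ s : {s : ℝ // s ∈ Icc (0:ℝ) 1 ∧ Above (fun t => H t s)}, WA s with hV
  have hUo : IsOpen U := isOpen_iUnion fun s => hWBo s
  have hVo : IsOpen V := isOpen_iUnion fun s => hWAo s
  have hUI : ∀ s ∈ U ∩ Icc (0:ℝ) 1, Below (fun t => H t s) := by
    rintro s ⟨hsU, hsI⟩
    rw [hU, mem_iUnion] at hsU
    obtain ⟨⟨s₀, hs₀⟩, hmem⟩ := hsU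
    exact (hWB s₀ hs₀).2 s ⟨hmem, hsI⟩
  have hVI : ∀ s ∈ V ∩ Icc (0:ℝ) 1, Above (fun t => H t s) := by
    rintro s ⟨hsV, hsI⟩
    rw [hV, mem_iUnion] at hsV
    obtain ⟨⟨s₀, hs₀⟩, hmem⟩ := hsV
    exact (hWA s₀ hs₀).2 s ⟨hmem, hsI⟩
  have hcover : Icc (0:ℝ) 1 ⊆ U ∪ V := by
    intro s hs
    rcases (hpath s hs).below_or_above with h | h
    · exact Or.inl (mem_iUnion.2 ⟨⟨s, hs, h⟩, (hWB s ⟨hs, h⟩).1⟩)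
    · exact Or.inr (mem_iUnion.2 ⟨⟨s, hs, h⟩, (hWA s ⟨hs, h⟩).1⟩)
  have h0I : (0:ℝ) ∈ Icc (0:ℝ) 1 := by constructor <;> norm_num
  have h1I : (1:ℝ) ∈ Icc (0:ℝ) 1 := by constructor <;> norm_num
  have transfer : ∀ (b : ℝ → ℝ × ℝ) (s : ℝ), (∀ t ∈ Icc (0:ℝ) 1, H t s = b t) →
      (Below (fun t => H t s) → Below b) ∧ (Above (fun t => H t s) → Above b) := by
    intro b s heq
    have heq' : ∀ t ∈ Icc (0:ℝ) 1, (fun t => H t s) t = b t := heq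
    constructor
    · intro hb t ht hx
      have := hb t ht (by rw [heq' t ht]; exact hx)
      rwa [heq' t ht] at this
    · intro hb t ht hx
      have := hb t ht (by rw [heq' t ht]; exact hx)
      rwa [heq' t ht] at this
  -- connectedness
  rcases (hpath 0 h0I).below_or_above with hb0 | ha0
  · left
    refine ⟨(transfer a 0 hs0).1 hb0, ?_⟩
    rcases (hpath 1 h1I).below_or_above with hb1 | ha1
    · exact (transfer a' 1 hs1).1 hb1
    · exfalso
      have hne := isPreconnected_Icc (a := (0:ℝ)) (b := 1) U V hUo hVo hcover
        ⟨0, h0I, mem_iUnion.2 ⟨⟨0, h0I, hb0⟩, (hWB 0 ⟨h0I, hb0⟩).1⟩⟩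
        ⟨1, h1I, mem_iUnion.2 ⟨⟨1, h1I, ha1⟩, (hWA 1 ⟨h1I, ha1⟩).1⟩⟩
      obtain ⟨s, hsI, hsU, hsV⟩ := hne
      exact (hpath s hsI).not_below_above (hUI s ⟨hsU, hsI⟩) (hVI s ⟨hsV, hsI⟩)
  · right
    refine ⟨(transfer a 0 hs0).2 ha0, ?_⟩
    rcases (hpath 1 h1I).below_or_above with hb1 | ha1
    · exfalso
      have hne := isPreconnected_Icc (a := (0:ℝ)) (b := 1) U V hUo hVo hcover
        ⟨1, h1I, mem_iUnion.2 ⟨⟨1, h1I, hb1⟩, (hWB 1 ⟨h1I, hb1⟩).1⟩⟩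
        ⟨0, h0I, mem_iUnion.2 ⟨⟨0, h0I, ha0⟩, (hWA 0 ⟨h0I, ha0⟩).1⟩⟩
      obtain ⟨s, hsI, hsU, hsV⟩ := hne
      exact (hpath s hsI).not_below_above (hUI s ⟨hsU, hsI⟩) (hVI s ⟨hsV, hsI⟩)
    · exact (transfer a' 1 hs1).2 ha1

noncomputable def pathBelow : ℝ → ℝ × ℝ := fun t => (min (2*t) 1, max (2*t-1) 0)

noncomputable def pathAbove : ℝ → ℝ × ℝ := fun t => (max (2*t-1) 0, min (2*t) 1)

lemma pathBelow_diPath : DiPath Qobs pathBelow := by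
  refine ⟨?_, ?_, ?_, ?_, ?_, ?_, ?_⟩
  · exact (((continuous_const.mul continuous_id).min continuous_const).prodMk
      (((continuous_const.mul continuous_id).sub continuous_const).max
        continuous_const)).continuousOn
  · intro t ⟨ht0, ht1⟩
    constructor
    · exact ⟨le_min (by linarith) (by norm_num), min_le_right _ _⟩
    · exact ⟨le_max_right _ _, max_le (by linarith) (by norm_num)⟩
  · intro t ⟨ht0, ht1⟩ hmem
    rw [mem_Qobs] at hmem
    obtain ⟨⟨hx1, hx2⟩, hy1, hy2⟩ := hmem
    simp only [pathBelow] at hx1 hx2 hy1 hy2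
    have h2t : 2*t < 2/3 := by
      rcases min_lt_iff.mp hx2 with h | h
      · exact h
      · norm_num at h
    have : max (2*t-1) 0 = 0 := max_eq_right (by linarith)
    rw [this] at hy1
    norm_num at hy1
  · intro t1 _ t2 _ h12
    exact min_le_min (by linarith) le_rfl
  · intro t1 _ t2 _ h12
    exact max_le_max (by linarith) le_rfl
  · norm_num [pathBelow]
  · norm_num [pathBelow]
lemma pathBelow_below : Below pathBelow := by
  intro t ⟨ht0, ht1⟩ hx
  obtain ⟨hx1, hx2⟩ := hx
  simp only [pathBelow] at hx1 hx2 ⊢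
  have h2t : 2*t < 2/3 := by
    rcases min_lt_iff.mp hx2 with h | h
    · exact h
    · norm_num at h
  rw [max_eq_right (by linarith : 2*t-1 ≤ 0)]
  norm_num

lemma pathAbove_diPath : DiPath Qobs pathAbove := by
  refine ⟨?_, ?_, ?_, ?_, ?_, ?_, ?_⟩
  · exact ((((continuous_const.mul continuous_id).sub continuous_const).max
      continuous_const).prodMk
      ((continuous_const.mul continuous_id).min continuous_const)).continuousOn
  · intro t ⟨ht0, ht1⟩
    constructor
    · exact ⟨le_max_right _ _, max_le (by linarith) (by norm_num)⟩
    · exact ⟨le_min (by linarith) (by norm_num), min_le_right _ _⟩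
  · intro t ⟨ht0, ht1⟩ hmem
    rw [mem_Qobs] at hmem
    obtain ⟨⟨hx1, hx2⟩, hy1, hy2⟩ := hmem
    simp only [pathAbove] at hx1 hx2 hy1 hy2
    have h2t : 1/3 < 2*t-1 := by
      rcases lt_max_iff.mp hx1 with h | h
      · exact h
      · norm_num at h
    have : min (2*t) 1 = 1 := min_eq_right (by linarith)
    rw [this] at hy2
    norm_num at hy2
  · intro t1 _ t2 _ h12
    exact max_le_max (by linarith) le_rfl
  · intro t1 _ t2 _ h12
    exact min_le_min (by linarith) le_rfl
  · norm_num [pathAbove]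
  · norm_num [pathAbove]
lemma pathAbove_above : Above pathAbove := by
  intro t ⟨ht0, ht1⟩ hx
  obtain ⟨hx1, hx2⟩ := hx
  simp only [pathAbove] at hx1 hx2 ⊢
  have h2t : 1/3 < 2*t-1 := by
    rcases lt_max_iff.mp hx1 with h | h
    · exact h
    · norm_num at h
  rw [min_eq_right (by linarith : (1:ℝ) ≤ 2*t)]
  norm_num

lemma not_above_pathBelow : ¬ Above pathBelow := by
  intro h
  have h14 : (1/4 : ℝ) ∈ Icc (0:ℝ) 1 := by constructor <;> norm_num
  have := h (1/4) h14 (by simp [pathBelow]; norm_num)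
  simp [pathBelow] at this
  norm_num at this

lemma not_below_pathAbove : ¬ Below pathAbove := by
  intro h
  have h34 : (3/4 : ℝ) ∈ Icc (0:ℝ) 1 := by constructor <;> norm_num
  have := h (3/4) h34 (by simp [pathAbove]; norm_num)
  simp [pathAbove] at this
  norm_num at this


/-- Two directed paths in the square annulus are joined by a directed homotopy if and
only if they pass on the same side of the obstruction; consequently there are exactly two
classes of directed paths up to directed homotopy. (The computation in 2.1 that the
fundamental category of the square annulus has exactly two arrows `0 → 1`.) -/
theorem diHomotopy_iff_same_side :
    (∀ a a' : ℝ → ℝ × ℝ, DiPath Qobs a → DiPath Qobs a' →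
      ((∃ H, DiHomotopy Qobs a a' H) ↔
        ((Below a ∧ Below a') ∨ (Above a ∧ Above a')))) ∧
    (∃ a₀ a₁ : ℝ → ℝ × ℝ, DiPath Qobs a₀ ∧ DiPath Qobs a₁ ∧
      ¬ (∃ H, DiHomotopy Qobs a₀ a₁ H) ∧
      ∀ a : ℝ → ℝ × ℝ, DiPath Qobs a →
        (∃ H, DiHomotopy Qobs a a₀ H) ∨ (∃ H, DiHomotopy Qobs a a₁ H)) := by
  constructor
  · intro a a' ha ha'
    constructor
    · rintro ⟨H, hH⟩
      exact same_side hH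
    · rintro (⟨hb, hb'⟩ | ⟨hab, hab'⟩)
      · exact homotopy_of_below ha ha' hb hb'
      · exact homotopy_of_above ha ha' hab hab'
  · refine ⟨pathBelow, pathAbove, pathBelow_diPath, pathAbove_diPath, ?_, ?_⟩
    · rintro ⟨H, hH⟩
      rcases same_side hH with ⟨-, hb⟩ | ⟨ha, -⟩
      · exact not_below_pathAbove hb
      · exact not_above_pathBelow ha
    · intro a ha
      rcases ha.below_or_above with hb | hab
      · exact Or.inl (homotopy_of_below ha pathBelow_diPath hb pathBelow_below)
      · exact Or.inr (homotopy_of_above ha pathAbove_diPath hab pathAbove_above)
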